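/- Let s, q ∈ ℝ² and R > 0 with R < ‖q − s‖ ≤ √3·R, and let ρ denote the rotation by angle π/3 about s. Then for every point x with ‖x − s‖ = R, at least one of the six points ρ^k(q), k = 0, 1, …, 5, satisfies ‖x − ρ^k(q)‖ ≤ R. (Six sensors located in the circular crown between radii R and √3 R around s, placed symmetrically under rotations by π/3 about s, jointly cover every point of the sensing circle of s at least once.) -/

import Mathlib

/-- The point (a, b) of the Euclidean plane. -/
noncomputable def pt (a b : ℝ) : EuclideanSpace ℝ (Fin 2) :=
  (WithLp.equiv 2 (Fin 2 → ℝ)).symm ![a, b]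

/-- Rotation of the plane by angle `θ` about the origin, the linear isometry with matrix
`[[cos θ, −sin θ], [sin θ, cos θ]]`. -/
noncomputable def rot (θ : ℝ) (p : EuclideanSpace ℝ (Fin 2)) : EuclideanSpace ℝ (Fin 2) :=
  pt (Real.cos θ * p 0 - Real.sin θ * p 1) (Real.sin θ * p 0 + Real.cos θ * p 1)

/-- Rotation of the plane by angle `θ` about the point `s`. -/
noncomputable def rotAbout (s : EuclideanSpace ℝ (Fin 2)) (θ : ℝ)
    (p : EuclideanSpace ℝ (Fin 2)) : EuclideanSpace ℝ (Fin 2) :=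
  s + rot θ (p - s)

lemma rot_rot (a b : ℝ) (p : EuclideanSpace ℝ (Fin 2)) : rot a (rot b p) = rot (a+b) p := by
  unfold rot
  ext i
  fin_cases i <;> simp [pt, Real.cos_add, Real.sin_add] <;> ring

lemma rot_zero (p : EuclideanSpace ℝ (Fin 2)) : rot 0 p = p := by
  unfold rot
  ext i
  fin_cases i <;> simp [pt]

lemma iter_rotAbout (s q : EuclideanSpace ℝ (Fin 2)) (θ : ℝ) (k : ℕ) :
    (rotAbout s θ)^[k] q = s + rot (k * θ) (q - s) := by
  induction k with
  | zero => simp [rot_zero]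
  | succ n ih =>
      rw [Function.iterate_succ_apply', ih]
      unfold rotAbout
      rw [add_sub_cancel_left, rot_rot]
      push_cast
      ring_nf

lemma sq_norm' (w : EuclideanSpace ℝ (Fin 2)) : ‖w‖^2 = w 0^2 + w 1^2 := by
  rw [EuclideanSpace.norm_eq, Real.sq_sqrt (by positivity)]
  simp [Fin.sum_univ_two, sq_abs]

lemma norm_le_of (w : EuclideanSpace ℝ (Fin 2)) (R : ℝ) (hR : 0 ≤ R)
    (h : w 0^2 + w 1^2 ≤ R^2) : ‖w‖ ≤ R := by
  nlinarith [sq_norm' w, norm_nonneg w]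

lemma key (A B V R : ℝ) (hR : 0 < R) (hAB : A^2 + B^2 = R^2 * V)
    (h1 : R^2 < V) (h3 : V ≤ 3 * R^2) :
    V ≤ 2*A ∨ V ≤ A + Real.sqrt 3 * B ∨ V ≤ -A + Real.sqrt 3 * B ∨
    V ≤ -(2*A) ∨ V ≤ -A - Real.sqrt 3 * B ∨ V ≤ A - Real.sqrt 3 * B := by
  set r := Real.sqrt 3 with hrdef
  have hr : r^2 = 3 := Real.sq_sqrt (by norm_num)
  have hr0 : (0:ℝ) ≤ r := Real.sqrt_nonneg 3
  have hV0 : 0 < V := lt_trans (by positivity) h1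
  rcases le_or_gt 0 A with hA | hA
  · rcases le_or_gt 0 B with hB | hB
    · rcases le_or_gt (r*B) A with h | h
      · left
        nlinarith [mul_nonneg (sub_nonneg.2 h) (by nlinarith : (0:ℝ) ≤ A + r*B),
          mul_pos hV0 hV0, mul_nonneg hA hV0.le]
      · right; left
        nlinarith [mul_nonneg hA (sub_nonneg.2 h.le), mul_pos hV0 hV0,
          mul_nonneg (by nlinarith : (0:ℝ) ≤ A + r*B) hV0.le]
    · rcases le_or_gt (-(r*B)) A with h | h
      · left
        nlinarith [mul_nonneg (by nlinarith : (0:ℝ) ≤ A - r*B) (by nlinarith : (0:ℝ) ≤ A + r*B),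
          mul_pos hV0 hV0, mul_nonneg hA hV0.le]
      · right; right; right; right; right
        nlinarith [mul_nonneg hA (by nlinarith : (0:ℝ) ≤ -(r*B) - A), mul_pos hV0 hV0,
          mul_nonneg (by nlinarith : (0:ℝ) ≤ A - r*B) hV0.le]
  · rcases le_or_gt 0 B with hB | hB
    · rcases le_or_gt (r*B) (-A) with h | h
      · right; right; right; left
        nlinarith [mul_nonneg (by nlinarith : (0:ℝ) ≤ -A - r*B) (by nlinarith : (0:ℝ) ≤ -A + r*B),
          mul_pos hV0 hV0, mul_nonneg (by linarith : (0:ℝ) ≤ -A) hV0.le]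
      · right; right; left
        nlinarith [mul_nonneg (by linarith : (0:ℝ) ≤ -A) (by nlinarith : (0:ℝ) ≤ r*B - (-A)),
          mul_pos hV0 hV0, mul_nonneg (by nlinarith : (0:ℝ) ≤ -A + r*B) hV0.le]
    · rcases le_or_gt (-(r*B)) (-A) with h | h
      · right; right; right; left
        nlinarith [mul_nonneg (by nlinarith : (0:ℝ) ≤ -A - r*B) (by nlinarith : (0:ℝ) ≤ -A + r*B),
          mul_pos hV0 hV0, mul_nonneg (by linarith : (0:ℝ) ≤ -A) hV0.le]
      · right; right; right; right; left
        nlinarith [mul_nonneg (by linarith : (0:ℝ) ≤ -A) (by nlinarith : (0:ℝ) ≤ -(r*B) - (-A)),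
          mul_pos hV0 hV0, mul_nonneg (by nlinarith : (0:ℝ) ≤ -A - r*B) hV0.le]

lemma finol (x s q : EuclideanSpace ℝ (Fin 2)) (R θ c sn : ℝ) (hR : 0 ≤ R)
    (hc : Real.cos θ = c) (hs : Real.sin θ = sn) (hcs : c^2 + sn^2 = 1)
    (hu : (x 0 - s 0)^2 + (x 1 - s 1)^2 = R^2)
    (h : (q 0 - s 0)^2 + (q 1 - s 1)^2 ≤
      2*(c*((x 0 - s 0)*(q 0 - s 0)+(x 1 - s 1)*(q 1 - s 1))
        + sn*((x 1 - s 1)*(q 0 - s 0) - (x 0 - s 0)*(q 1 - s 1)))) :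
    ‖x - (s + rot θ (q - s))‖ ≤ R := by
  apply norm_le_of _ _ hR
  have hcsV : (c^2 + sn^2) * ((q 0 - s 0)^2 + (q 1 - s 1)^2)
      = (q 0 - s 0)^2 + (q 1 - s 1)^2 := by rw [hcs, one_mul]
  simp only [rot, pt, WithLp.equiv_symm_apply, WithLp.ofLp_toLp, PiLp.add_apply, PiLp.sub_apply,
    Matrix.cons_val_zero, Matrix.cons_val_one, Matrix.head_cons, hc, hs]
  nlinarith [hu, h, hcsV]

set_option maxHeartbeats 1600000 in
/-- Six sensors of sensing radius `R` located in the circular crown between radii `R` and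
`√3 R` around `s`, placed symmetrically under rotations by `π/3` about `s`, jointly cover
every point of the sensing circle of `s` at least once: for every `x` with `‖x − s‖ = R`,
at least one of the six points `ρ^k(q)`, `k = 0, …, 5`, is within distance `R` of `x`. -/
theorem outer_crown_single_perimeter_coverage (s q : EuclideanSpace ℝ (Fin 2)) (R : ℝ)
    (hR : 0 < R) (hq : R < ‖q - s‖) (hqR : ‖q - s‖ ≤ Real.sqrt 3 * R)
    (x : EuclideanSpace ℝ (Fin 2)) (hx : ‖x - s‖ = R) :
    ∃ k : Fin 6, ‖x - (rotAbout s (Real.pi / 3))^[(k : ℕ)] q‖ ≤ R := by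
  have hr : Real.sqrt 3 ^ 2 = 3 := Real.sq_sqrt (by norm_num)
  have hr0 : (0:ℝ) ≤ Real.sqrt 3 := Real.sqrt_nonneg 3
  have hu : (x 0 - s 0)^2 + (x 1 - s 1)^2 = R^2 := by
    have h1 := sq_norm' (x - s)
    simp only [PiLp.sub_apply] at h1
    rw [hx] at h1
    linarith
  have hqs := sq_norm' (q - s)
  simp only [PiLp.sub_apply] at hqs
  have hv1 : R^2 < (q 0 - s 0)^2 + (q 1 - s 1)^2 := by
    rw [← hqs]
    nlinarith [norm_nonneg (q - s)]
  have hv3 : (q 0 - s 0)^2 + (q 1 - s 1)^2 ≤ 3 * R^2 := by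
    rw [← hqs]
    nlinarith [norm_nonneg (q - s), hr]
  have hAB : ((x 0 - s 0)*(q 0 - s 0) + (x 1 - s 1)*(q 1 - s 1))^2
      + ((x 1 - s 1)*(q 0 - s 0) - (x 0 - s 0)*(q 1 - s 1))^2
      = R^2 * ((q 0 - s 0)^2 + (q 1 - s 1)^2) := by
    rw [← hu]; ring
  have c2 : Real.cos (((2:ℕ):ℝ) * (Real.pi/3)) = -(1/2) := by
    have h : ((2:ℕ):ℝ) * (Real.pi/3) = Real.pi - Real.pi/3 := by push_cast; ring
    rw [h, Real.cos_pi_sub, Real.cos_pi_div_three]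
  have s2 : Real.sin (((2:ℕ):ℝ) * (Real.pi/3)) = Real.sqrt 3 / 2 := by
    have h : ((2:ℕ):ℝ) * (Real.pi/3) = Real.pi - Real.pi/3 := by push_cast; ring
    rw [h, Real.sin_pi_sub, Real.sin_pi_div_three]
  have c3 : Real.cos (((3:ℕ):ℝ) * (Real.pi/3)) = -1 := by
    have h : ((3:ℕ):ℝ) * (Real.pi/3) = Real.pi := by push_cast; ring
    rw [h, Real.cos_pi]
  have s3 : Real.sin (((3:ℕ):ℝ) * (Real.pi/3)) = 0 := by
    have h : ((3:ℕ):ℝ) * (Real.pi/3) = Real.pi := by push_cast; ring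
    rw [h, Real.sin_pi]
  have c4 : Real.cos (((4:ℕ):ℝ) * (Real.pi/3)) = -(1/2) := by
    have h : ((4:ℕ):ℝ) * (Real.pi/3) = Real.pi + Real.pi/3 := by push_cast; ring
    rw [h, Real.cos_add, Real.cos_pi, Real.sin_pi, Real.cos_pi_div_three]; ring
  have s4 : Real.sin (((4:ℕ):ℝ) * (Real.pi/3)) = -(Real.sqrt 3 / 2) := by
    have h : ((4:ℕ):ℝ) * (Real.pi/3) = Real.pi + Real.pi/3 := by push_cast; ring
    rw [h, Real.sin_add, Real.cos_pi, Real.sin_pi, Real.sin_pi_div_three]; ring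
  have c5 : Real.cos (((5:ℕ):ℝ) * (Real.pi/3)) = 1/2 := by
    have h : ((5:ℕ):ℝ) * (Real.pi/3) = 2*Real.pi - Real.pi/3 := by push_cast; ring
    rw [h, Real.cos_sub, Real.cos_two_pi, Real.sin_two_pi, Real.cos_pi_div_three]; ring
  have s5 : Real.sin (((5:ℕ):ℝ) * (Real.pi/3)) = -(Real.sqrt 3 / 2) := by
    have h : ((5:ℕ):ℝ) * (Real.pi/3) = 2*Real.pi - Real.pi/3 := by push_cast; ring
    rw [h, Real.sin_sub, Real.cos_two_pi, Real.sin_two_pi, Real.sin_pi_div_three]; ring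
  have c1 : Real.cos (((1:ℕ):ℝ) * (Real.pi/3)) = 1/2 := by
    push_cast; rw [one_mul, Real.cos_pi_div_three]
  have s1 : Real.sin (((1:ℕ):ℝ) * (Real.pi/3)) = Real.sqrt 3 / 2 := by
    push_cast; rw [one_mul, Real.sin_pi_div_three]
  have c0 : Real.cos (((0:ℕ):ℝ) * (Real.pi/3)) = 1 := by push_cast; rw [zero_mul, Real.cos_zero]
  have s0 : Real.sin (((0:ℕ):ℝ) * (Real.pi/3)) = 0 := by push_cast; rw [zero_mul, Real.sin_zero]
  rcases key ((x 0 - s 0)*(q 0 - s 0) + (x 1 - s 1)*(q 1 - s 1))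
      ((x 1 - s 1)*(q 0 - s 0) - (x 0 - s 0)*(q 1 - s 1)) _ R hR hAB hv1 hv3
    with h | h | h | h | h | h
  · refine ⟨0, ?_⟩
    rw [show (((0:Fin 6)):ℕ) = 0 from rfl, iter_rotAbout]
    exact finol x s q R _ 1 0 hR.le c0 s0 (by norm_num) hu (by linarith)
  · refine ⟨1, ?_⟩
    rw [show (((1:Fin 6)):ℕ) = 1 from rfl, iter_rotAbout]
    exact finol x s q R _ (1/2) (Real.sqrt 3 / 2) hR.le c1 s1 (by linear_combination hr / 4) hu (by linarith)
  · refine ⟨2, ?_⟩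
    rw [show (((2:Fin 6)):ℕ) = 2 from rfl, iter_rotAbout]
    exact finol x s q R _ (-(1/2)) (Real.sqrt 3 / 2) hR.le c2 s2 (by linear_combination hr / 4) hu (by linarith)
  · refine ⟨3, ?_⟩
    rw [show (((3:Fin 6)):ℕ) = 3 from rfl, iter_rotAbout]
    exact finol x s q R _ (-1) 0 hR.le c3 s3 (by norm_num) hu (by linarith)
  · refine ⟨4, ?_⟩
    rw [show (((4:Fin 6)):ℕ) = 4 from rfl, iter_rotAbout]
    exact finol x s q R _ (-(1/2)) (-(Real.sqrt 3 / 2)) hR.le c4 s4 (by linear_combination hr / 4) hu (by linarith)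
  · refine ⟨5, ?_⟩
    rw [show (((5:Fin 6)):ℕ) = 5 from rfl, iter_rotAbout]
    exact finol x s q R _ (1/2) (-(Real.sqrt 3 / 2)) hR.le c5 s5 (by linear_combination hr / 4) hu (by linarith)
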